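/- The number of sequences of 2n+1 steps ±1 with total sum 1 that begin with +1 and have exactly k of their +1 steps starting at height ≤ 0 equals C_n, for each k = 0,1,…,n. -/

import Mathlib

def stepVal (b : Bool) : ℤ := if b then 1 else -1

def psum {m : ℕ} (f : Fin m → Bool) (p : ℕ) : ℤ :=
  (((List.ofFn f).take p).map stepVal).sum

def ssum (l : List Bool) : ℤ := (l.map stepVal).sum

@[simp] lemma ssum_nil : ssum [] = 0 := rfl
@[simp] lemma ssum_cons (b : Bool) (l : List Bool) : ssum (b :: l) = stepVal b + ssum l := by
  simp [ssum]
@[simp] lemma ssum_append (a b : List Bool) : ssum (a ++ b) = ssum a + ssum b := by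
  simp [ssum]
lemma ssum_map_not (l : List Bool) : ssum (l.map not) = -ssum l := by
  induction l with
  | nil => simp
  | cons b t ih => cases b <;> simp [ssum_cons, ih, stepVal] <;> ring

def cnt : ℤ → List Bool → ℕ
  | _, [] => 0
  | h, b :: t => (if b = true ∧ h < 0 then 1 else 0) + cnt (h + stepVal b) t

@[simp] lemma cnt_nil (h : ℤ) : cnt h [] = 0 := rfl
lemma cnt_cons (h : ℤ) (b : Bool) (t : List Bool) :
    cnt h (b :: t) = (if b = true ∧ h < 0 then 1 else 0) + cnt (h + stepVal b) t := rfl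

lemma cnt_append (h : ℤ) (a b : List Bool) :
    cnt h (a ++ b) = cnt h a + cnt (h + ssum a) b := by
  induction a generalizing h with
  | nil => simp
  | cons c t ih => simp [cnt_cons, ih, add_assoc]

lemma cnt_mono {h h' : ℤ} (hh : h ≤ h') (l : List Bool) : cnt h' l ≤ cnt h l := by
  induction l generalizing h h' with
  | nil => simp
  | cons b t ih =>
    simp only [cnt_cons]
    gcongr
    · split <;> split
      · exact le_refl 1
      · rename_i h1 h2; exact absurd ⟨h1.1, lt_of_le_of_lt hh h1.2⟩ h2
      · exact Nat.zero_le 1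
      · exact le_refl 0
    · exact ih (by omega)

lemma cnt_le_count (h : ℤ) (l : List Bool) : cnt h l ≤ l.count true := by
  induction l generalizing h with
  | nil => simp
  | cons b t ih =>
    rw [cnt_cons, List.count_cons]
    have h1 := ih (h + stepVal b)
    split
    · rename_i hb; obtain ⟨hb, _⟩ := hb; subst hb; simp; omega
    · cases b <;> simp <;> omega

lemma count_true_of_balanced {l : List Bool} (hs : ssum l = 0) :
    (l.count true : ℤ) = l.length / 2 ∧ 2 * l.count true = l.length := by
  have key : ∀ m : List Bool, ssum m = (m.count true : ℤ) - (m.count false : ℤ) := by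
    intro m
    induction m with
    | nil => simp
    | cons b t ih => cases b <;> simp [List.count_cons, ih, stepVal] <;> ring
  have klen : ∀ m : List Bool, m.count true + m.count false = m.length := by
    intro m
    induction m with
    | nil => simp
    | cons b t ih => cases b <;> simp [List.count_cons] <;> omega
  have h1 := key l
  have h2 := klen l
  rw [hs] at h1
  constructor <;> omega

lemma cnt_eq_zero_of_nonneg {h : ℤ} {l : List Bool}
    (H : ∀ p, 0 ≤ h + ssum (l.take p)) : cnt h l = 0 := by
  induction l generalizing h with
  | nil => simp
  | cons b t ih =>
    have h0 : 0 ≤ h := by simpa using H 0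
    rw [cnt_cons]
    have ht : cnt (h + stepVal b) t = 0 := by
      apply ih
      intro p
      have := H (p + 1)
      simpa [List.take_succ_cons, add_assoc] using this
    rw [ht]
    have : ¬ (b = true ∧ h < 0) := by rintro ⟨_, hlt⟩; omega
    simp [this]

lemma one_le_cnt_of_neg {h : ℤ} {l : List Bool} (hneg : h < 0) (hend : 0 ≤ h + ssum l) :
    1 ≤ cnt h l := by
  induction l generalizing h with
  | nil => simp at hend; omega
  | cons b t ih =>
    rw [cnt_cons]
    cases b with
    | true => simp [hneg]
    | false =>
      have : 1 ≤ cnt (h + stepVal false) t := by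
        apply ih
        · simp [stepVal]; omega
        · rw [ssum_cons] at hend; simp [stepVal] at hend ⊢; omega
      omega

lemma nonneg_prefix_of_cnt_zero {h : ℤ} {l : List Bool} (h0 : 0 ≤ h)
    (hc : cnt h l = 0) (hend : 0 ≤ h + ssum l) : ∀ p, 0 ≤ h + ssum (l.take p) := by
  induction l generalizing h with
  | nil => intro p; simpa using h0
  | cons b t ih =>
    intro p
    cases p with
    | zero => simpa using h0
    | succ p =>
      rw [List.take_succ_cons, ssum_cons, ← add_assoc]
      rw [cnt_cons] at hc
      have hct : cnt (h + stepVal b) t = 0 := by omega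
      have hend' : 0 ≤ (h + stepVal b) + ssum t := by rw [ssum_cons] at hend; omega
      have hb0 : 0 ≤ h + stepVal b := by
        cases b with
        | true => simp [stepVal]; omega
        | false =>
          simp only [stepVal] at hct hend' ⊢
          by_contra hlt
          push_neg at hlt
          have := one_le_cnt_of_neg (h := h + (if false = true then (1:ℤ) else -1)) (l := t)
            (by simpa using hlt) hend'
          omega
      exact ih hb0 hct hend' p

lemma cnt_eq_count_of_neg {h : ℤ} {l : List Bool}
    (H : ∀ p, p < l.length → h + ssum (l.take p) < 0) : cnt h l = l.count true := by
  induction l generalizing h with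
  | nil => simp
  | cons b t ih =>
    have h0 : h < 0 := by simpa using H 0 (by simp)
    rw [cnt_cons, List.count_cons]
    have ht : cnt (h + stepVal b) t = t.count true := by
      apply ih
      intro p hp
      have := H (p + 1) (by simpa using Nat.succ_lt_succ hp)
      simpa [List.take_succ_cons, add_assoc] using this
    cases b <;> simp [ht, h0] <;> omega

def boolLists : ℕ → Finset (List Bool)
  | 0 => {[]}
  | n + 1 => (boolLists n).biUnion fun t => {true :: t, false :: t}

lemma mem_boolLists {n : ℕ} {l : List Bool} : l ∈ boolLists n ↔ l.length = n := by
  induction n generalizing l with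
  | zero => simp [boolLists, List.length_eq_zero_iff]
  | succ n ih =>
    simp only [boolLists, Finset.mem_biUnion, Finset.mem_insert, Finset.mem_singleton]
    constructor
    · rintro ⟨t, ht, rfl | rfl⟩ <;> simp [ih.mp ht]
    · intro hl
      cases l with
      | nil => simp at hl
      | cons b t =>
        refine ⟨t, ih.mpr (by simpa using hl), ?_⟩
        cases b <;> simp

def S (n k : ℕ) : Finset (List Bool) :=
  (boolLists (2 * n)).filter fun l => ssum l = 0 ∧ cnt 0 l = k

lemma mem_S {n k : ℕ} {l : List Bool} :
    l ∈ S n k ↔ l.length = 2 * n ∧ ssum l = 0 ∧ cnt 0 l = k := by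
  simp [S, Finset.mem_filter, mem_boolLists]

lemma S_card_eq_zero {n k : ℕ} (h : n < k) : (S n k).card = 0 := by
  rw [Finset.card_eq_zero]
  ext l
  simp only [mem_S, Finset.notMem_empty, iff_false]
  rintro ⟨hl, hs, hc⟩
  have h1 := cnt_le_count 0 l
  have h2 := (count_true_of_balanced hs).2
  omega

/-- prefix sums of an element of `S m 0` are nonnegative -/
lemma S_zero_prefix {m : ℕ} {p : List Bool} (hp : p ∈ S m 0) :
    ∀ j, 0 ≤ ssum (p.take j) := by
  rw [mem_S] at hp
  intro j
  have := nonneg_prefix_of_cnt_zero (h := 0) (l := p) le_rfl hp.2.2 (by rw [hp.2.1]; simp) j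
  simpa using this

def glueT (pq : List Bool × List Bool) : List Bool := true :: pq.1 ++ false :: pq.2
def glueF (pq : List Bool × List Bool) : List Bool := false :: pq.1.map not ++ true :: pq.2

def Am (n k m : ℕ) : Finset (List Bool) := ((S m 0) ×ˢ (S (n - m) k)).image glueT
def Bm (n k m : ℕ) : Finset (List Bool) :=
  if m + 1 ≤ k then ((S m 0) ×ˢ (S (n - m) (k - (m + 1)))).image glueF else ∅

lemma take_glue_small {b c : Bool} {p q : List Bool} {t : ℕ} (h1 : 1 ≤ t) (h2 : t ≤ p.length + 1) :
    (b :: p ++ c :: q).take t = b :: p.take (t - 1) := by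
  obtain ⟨t, rfl⟩ := Nat.exists_eq_add_of_le h1
  rw [Nat.add_comm]
  simp only [List.cons_append, List.take_succ_cons, Nat.add_sub_cancel]
  rw [List.take_append]
  have : t - p.length = 0 := by omega
  rw [this]
  simp

lemma take_glue_mid {b c : Bool} {p q : List Bool} :
    (b :: p ++ c :: q).take (p.length + 2) = b :: p ++ [c] := by
  simp only [List.cons_append, List.take_succ_cons]
  rw [List.take_append]
  have : p.length + 1 - p.length = 1 := by omega
  rw [this]
  simp

lemma ssum_take_map_not (p : List Bool) (j : ℕ) :
    ssum ((p.map not).take j) = - ssum (p.take j) := by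
  rw [← List.map_take, ssum_map_not]

lemma count_true_map_not (l : List Bool) : (l.map not).count true = l.count false := by
  induction l with
  | nil => simp
  | cons b t ih => cases b <;> simp [List.count_cons, ih]

lemma count_add_count (l : List Bool) : l.count true + l.count false = l.length := by
  induction l with
  | nil => simp
  | cons b t ih => cases b <;> simp [List.count_cons] <;> omega

lemma glueT_prefix {m : ℕ} {p q : List Bool} (hp : p ∈ S m 0) :
    (∀ t, 1 ≤ t → t ≤ 2 * m + 1 → 1 ≤ ssum ((glueT (p, q)).take t)) ∧
      ssum ((glueT (p, q)).take (2 * m + 2)) = 0 := by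
  have hlen : p.length = 2 * m := (mem_S.mp hp).1
  have hs : ssum p = 0 := (mem_S.mp hp).2.1
  constructor
  · intro t h1 h2
    rw [glueT, take_glue_small h1 (by simp only []; omega), ssum_cons]
    have := S_zero_prefix hp (t - 1)
    simp [stepVal]; omega
  · have : 2 * m + 2 = p.length + 2 := by omega
    rw [glueT, this, take_glue_mid]
    simp [hs, stepVal]

lemma glueF_prefix {m : ℕ} {p q : List Bool} (hp : p ∈ S m 0) :
    (∀ t, 1 ≤ t → t ≤ 2 * m + 1 → ssum ((glueF (p, q)).take t) ≤ -1) ∧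
      ssum ((glueF (p, q)).take (2 * m + 2)) = 0 := by
  have hlen : p.length = 2 * m := (mem_S.mp hp).1
  have hs : ssum p = 0 := (mem_S.mp hp).2.1
  have hlen' : (p.map not).length = 2 * m := by simpa using hlen
  constructor
  · intro t h1 h2
    rw [glueF, take_glue_small h1 (by simp only [List.length_map]; omega), ssum_cons, ssum_take_map_not]
    have := S_zero_prefix hp (t - 1)
    simp [stepVal]; omega
  · have : 2 * m + 2 = (p.map not).length + 2 := by omega
    rw [glueF, this, take_glue_mid]
    simp [ssum_map_not, hs, stepVal]

lemma mem_S_of_glueT {n k m : ℕ} (hm : m ≤ n) {p q : List Bool}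
    (hp : p ∈ S m 0) (hq : q ∈ S (n - m) k) : glueT (p, q) ∈ S (n + 1) k := by
  obtain ⟨hpl, hps, hpc⟩ := mem_S.mp hp
  obtain ⟨hql, hqs, hqc⟩ := mem_S.mp hq
  rw [mem_S, glueT]
  refine ⟨by simp [hpl, hql]; omega, by simp [hps, hqs, stepVal], ?_⟩
  rw [List.cons_append, cnt_cons, cnt_append, cnt_cons]
  have h1 : cnt 1 p = 0 :=
    Nat.le_zero.mp (le_trans (cnt_mono (by norm_num : (0:ℤ) ≤ 1) p) (le_of_eq hpc))
  simp [h1, hps, stepVal, hqc]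

lemma mem_S_of_glueF {n k m : ℕ} (hm : m ≤ n) (hk : m + 1 ≤ k) {p q : List Bool}
    (hp : p ∈ S m 0) (hq : q ∈ S (n - m) (k - (m + 1))) : glueF (p, q) ∈ S (n + 1) k := by
  obtain ⟨hpl, hps, hpc⟩ := mem_S.mp hp
  obtain ⟨hql, hqs, hqc⟩ := mem_S.mp hq
  rw [mem_S, glueF]
  have hlen' : (p.map not).length = 2 * m := by simpa using hpl
  refine ⟨by simp [hpl, hql]; omega, by simp [ssum_map_not, hps, hqs, stepVal], ?_⟩
  rw [List.cons_append, cnt_cons, cnt_append, cnt_cons]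
  have hcount : (p.map not).count true = m := by
    have h2 := (count_true_of_balanced hps).2
    have h3 := count_true_map_not p
    have h4 := count_add_count p
    omega
  have h1 : cnt (0 + stepVal false) (p.map not) = (p.map not).count true := by
    apply cnt_eq_count_of_neg
    intro j hj
    rw [ssum_take_map_not]
    have := S_zero_prefix hp j
    simp [stepVal]; omega
  rw [h1, hcount]
  simp [ssum_map_not, hps, stepVal, hqc]
  omega

lemma mem_Am_iff {n k m : ℕ} {x : List Bool} :
    x ∈ Am n k m ↔ ∃ p q, p ∈ S m 0 ∧ q ∈ S (n - m) k ∧ x = glueT (p, q) := by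
  simp only [Am, Finset.mem_image, Finset.mem_product, Prod.exists]
  constructor
  · rintro ⟨p, q, ⟨h1, h2⟩, rfl⟩; exact ⟨p, q, h1, h2, rfl⟩
  · rintro ⟨p, q, h1, h2, rfl⟩; exact ⟨p, q, ⟨h1, h2⟩, rfl⟩

lemma mem_Bm_iff {n k m : ℕ} {x : List Bool} :
    x ∈ Bm n k m ↔ m + 1 ≤ k ∧
      ∃ p q, p ∈ S m 0 ∧ q ∈ S (n - m) (k - (m + 1)) ∧ x = glueF (p, q) := by
  rw [Bm]
  split
  · rename_i hkm
    simp only [Finset.mem_image, Finset.mem_product, Prod.exists, hkm, true_and]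
    constructor
    · rintro ⟨p, q, ⟨h1, h2⟩, rfl⟩; exact ⟨p, q, h1, h2, rfl⟩
    · rintro ⟨p, q, h1, h2, rfl⟩; exact ⟨p, q, ⟨h1, h2⟩, rfl⟩
  · rename_i hkm; simp [hkm]

lemma Am_subset {n k m : ℕ} (hm : m ≤ n) : Am n k m ⊆ S (n + 1) k := by
  intro x hx
  obtain ⟨p, q, hp, hq, rfl⟩ := mem_Am_iff.mp hx
  exact mem_S_of_glueT hm hp hq

lemma Bm_subset {n k m : ℕ} (hm : m ≤ n) : Bm n k m ⊆ S (n + 1) k := by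
  intro x hx
  obtain ⟨hkm, p, q, hp, hq, rfl⟩ := mem_Bm_iff.mp hx
  exact mem_S_of_glueF hm hkm hp hq

lemma head_Am {n k m : ℕ} {x : List Bool} (hx : x ∈ Am n k m) : x.head? = some true := by
  obtain ⟨p, q, hp, hq, rfl⟩ := mem_Am_iff.mp hx; rfl

lemma head_Bm {n k m : ℕ} {x : List Bool} (hx : x ∈ Bm n k m) : x.head? = some false := by
  obtain ⟨hkm, p, q, hp, hq, rfl⟩ := mem_Bm_iff.mp hx; rfl

lemma Am_prefix {n k m : ℕ} {x : List Bool} (hx : x ∈ Am n k m) :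
    (∀ t, 1 ≤ t → t ≤ 2 * m + 1 → 1 ≤ ssum (x.take t)) ∧ ssum (x.take (2 * m + 2)) = 0 := by
  obtain ⟨p, q, hp, hq, rfl⟩ := mem_Am_iff.mp hx
  exact glueT_prefix hp

lemma Bm_prefix {n k m : ℕ} {x : List Bool} (hx : x ∈ Bm n k m) :
    (∀ t, 1 ≤ t → t ≤ 2 * m + 1 → ssum (x.take t) ≤ -1) ∧ ssum (x.take (2 * m + 2)) = 0 := by
  obtain ⟨hkm, p, q, hp, hq, rfl⟩ := mem_Bm_iff.mp hx
  exact glueF_prefix hp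

lemma AB_disj {n k m m' : ℕ} : Disjoint (Am n k m) (Bm n k m') := by
  rw [Finset.disjoint_left]
  intro x hxa hxb
  have := head_Am hxa
  rw [head_Bm hxb] at this
  simp at this

lemma Am_disj {n k : ℕ} {m m' : ℕ} (h : m ≠ m') : Disjoint (Am n k m) (Am n k m') := by
  wlog hlt : m < m' generalizing m m'
  · exact (this h.symm (by omega)).symm
  rw [Finset.disjoint_left]
  intro x hxa hxb
  have h1 := (Am_prefix hxa).2
  have h2 := (Am_prefix hxb).1 (2 * m + 2) (by omega) (by omega)
  omega

lemma Bm_disj {n k : ℕ} {m m' : ℕ} (h : m ≠ m') : Disjoint (Bm n k m) (Bm n k m') := by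
  wlog hlt : m < m' generalizing m m'
  · exact (this h.symm (by omega)).symm
  rw [Finset.disjoint_left]
  intro x hxa hxb
  have h1 := (Bm_prefix hxa).2
  have h2 := (Bm_prefix hxb).1 (2 * m + 2) (by omega) (by omega)
  omega

lemma card_Am {n k m : ℕ} : (Am n k m).card = (S m 0).card * (S (n - m) k).card := by
  rw [Am, Finset.card_image_of_injOn, Finset.card_product]
  rintro ⟨p, q⟩ hpq ⟨P, Q⟩ hPQ hg
  simp only [Finset.mem_coe, Finset.mem_product] at hpq hPQ
  have hl : p.length = P.length := by
    rw [(mem_S.mp hpq.1).1, (mem_S.mp hPQ.1).1]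
  simp only [glueT, List.cons_append, List.cons.injEq, true_and] at hg
  obtain ⟨h1, h2⟩ := List.append_inj hg hl
  simp at h2
  simp [h1, h2]

lemma card_Bm {n k m : ℕ} (hkm : m + 1 ≤ k) :
    (Bm n k m).card = (S m 0).card * (S (n - m) (k - (m + 1))).card := by
  rw [Bm, if_pos hkm, Finset.card_image_of_injOn, Finset.card_product]
  rintro ⟨p, q⟩ hpq ⟨P, Q⟩ hPQ hg
  simp only [Finset.mem_coe, Finset.mem_product] at hpq hPQ
  have hl : (p.map not).length = (P.map not).length := by
    simp [(mem_S.mp hpq.1).1, (mem_S.mp hPQ.1).1]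
  simp only [glueF, List.cons_append, List.cons.injEq, true_and] at hg
  obtain ⟨h1, h2⟩ := List.append_inj hg hl
  simp at h2
  have : p = P := by
    have := congrArg (List.map not) h1
    simpa [List.map_map, Function.comp_def, Bool.not_not] using this
  simp [this, h2]

lemma ssum_take_succ {l : List Bool} {t : ℕ} (h : t < l.length) :
    ssum (l.take (t + 1)) = ssum (l.take t) + stepVal (l[t]'h) := by
  have := List.sum_take_succ (l.map stepVal) t (by simpa using h)
  simpa [ssum] using this

lemma pos_prefix {l : List Bool} {F : ℕ} (hFlen : F ≤ l.length)
    (hmin : ∀ t, 1 ≤ t → t < F → ssum (l.take t) ≠ 0)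
    (h1 : ssum (l.take 1) = 1) :
    ∀ t, 1 ≤ t → t < F → 1 ≤ ssum (l.take t) := by
  intro t
  induction t with
  | zero => omega
  | succ t ih =>
    intro _ hlt
    rcases Nat.eq_zero_or_pos t with rfl | htpos
    · rw [h1]
    · have hprev := ih (by omega) (by omega)
      have hlt' : t < l.length := by omega
      have hstep := ssum_take_succ hlt'
      have hne := hmin (t + 1) (by omega) hlt
      have hv : stepVal (l[t]'hlt') = 1 ∨ stepVal (l[t]'hlt') = -1 := by
        cases hb : l[t]'hlt' <;> simp [stepVal, hb]
      omega

lemma neg_prefix {l : List Bool} {F : ℕ} (hFlen : F ≤ l.length)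
    (hmin : ∀ t, 1 ≤ t → t < F → ssum (l.take t) ≠ 0)
    (h1 : ssum (l.take 1) = -1) :
    ∀ t, 1 ≤ t → t < F → ssum (l.take t) ≤ -1 := by
  intro t
  induction t with
  | zero => omega
  | succ t ih =>
    intro _ hlt
    rcases Nat.eq_zero_or_pos t with rfl | htpos
    · rw [h1]
    · have hprev := ih (by omega) (by omega)
      have hlt' : t < l.length := by omega
      have hstep := ssum_take_succ hlt'
      have hne := hmin (t + 1) (by omega) hlt
      have hv : stepVal (l[t]'hlt') = 1 ∨ stepVal (l[t]'hlt') = -1 := by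
        cases hb : l[t]'hlt' <;> simp [stepVal, hb]
      omega

lemma cover {n k : ℕ} {l : List Bool} (hl : l ∈ S (n + 1) k) :
    ∃ m, m ≤ n ∧ l ∈ Am n k m ∪ Bm n k m := by
  classical
  obtain ⟨hlen, hs, hc⟩ := mem_S.mp hl
  have hex : ∃ t, 1 ≤ t ∧ ssum (l.take t) = 0 :=
    ⟨l.length, by omega, by rw [List.take_length]; exact hs⟩
  obtain ⟨F, hF1, hFs, hFlen, hmin⟩ :
      ∃ F, 1 ≤ F ∧ ssum (l.take F) = 0 ∧ F ≤ l.length ∧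
        ∀ t, 1 ≤ t → t < F → ssum (l.take t) ≠ 0 :=
    ⟨Nat.find hex, (Nat.find_spec hex).1, (Nat.find_spec hex).2,
      Nat.find_min' hex ⟨by omega, by rw [List.take_length]; exact hs⟩,
      fun t h1 h2 h0 => Nat.find_min hex h2 ⟨h1, h0⟩⟩
  obtain ⟨b, r, rfl⟩ : ∃ b r, l = b :: r := by
    cases l with
    | nil => simp at hlen
    | cons b r => exact ⟨b, r, rfl⟩
  have htake1 : ssum ((b :: r).take 1) = stepVal b := by simp
  have hF2 : 2 ≤ F := by
    by_contra h
    have hF1' : F = 1 := by omega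
    rw [hF1', htake1] at hFs
    cases b <;> simp [stepVal] at hFs
  obtain ⟨Fm, rfl⟩ : ∃ Fm, F = Fm + 2 := ⟨F - 2, by omega⟩
  have hrlen : r.length = 2 * n + 1 := by simp at hlen; omega
  have hFmr : Fm < r.length := by omega
  obtain ⟨c, hc'⟩ : ∃ c, r[Fm]'hFmr = c := ⟨_, rfl⟩
  set p : List Bool := r.take Fm with hpdef
  set q : List Bool := r.drop (Fm + 1) with hqdef
  have hplen : p.length = Fm := by rw [hpdef, List.length_take]; omega
  have hqlen : q.length = 2 * n - Fm := by rw [hqdef, List.length_drop]; omega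
  have hdecomp : b :: r = b :: p ++ c :: q := by
    simp only [List.cons_append, List.cons.injEq, true_and]
    conv_lhs => rw [← List.take_append_drop Fm r]
    rw [← hpdef]
    congr 1
    rw [List.drop_eq_getElem_cons hFmr, hc', hqdef]
  -- parity
  have heven : 2 * (((b :: r).take (Fm + 2)).count true) = Fm + 2 := by
    have := (count_true_of_balanced hFs).2
    rwa [List.length_take, Nat.min_eq_left (by simp; omega)] at this
  obtain ⟨mm, hmm⟩ : ∃ mm, Fm = 2 * mm := ⟨((b :: r).take (Fm + 2)).count true - 1, by omega⟩
  have hmn : mm ≤ n := by omega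
  -- take relations
  have htake_small : ∀ j, j ≤ Fm → (b :: r).take (j + 1) = b :: p.take j := by
    intro j hj
    conv_lhs => rw [hdecomp]
    rw [take_glue_small (by omega) (by rw [hplen]; omega)]
    simp
  have hmid : (b :: r).take (Fm + 2) = b :: p ++ [c] := by
    conv_lhs => rw [hdecomp]
    rw [show Fm + 2 = p.length + 2 by omega]
    exact take_glue_mid
  have hptake : p.take Fm = p := by rw [← hplen]; exact List.take_length
  have hsum_mid : stepVal b + ssum p + stepVal c = 0 := by
    have h0 := congrArg ssum hmid
    rw [hFs] at h0
    simp only [List.cons_append, ssum_cons, ssum_append, ssum_nil] at h0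
    omega
  have htakeF1 : ssum ((b :: r).take (Fm + 1)) = stepVal b + ssum p := by
    rw [htake_small Fm le_rfl, hptake, ssum_cons]
  cases b with
  | true =>
    have hpos := pos_prefix hFlen hmin (by simpa [stepVal] using htake1)
    have hp1 : (1 : ℤ) ≤ 1 + ssum p := by
      have := hpos (Fm + 1) (by omega) (by omega)
      rw [htakeF1] at this
      simpa [stepVal] using this
    have hcval : c = false ∧ ssum p = 0 := by
      cases c <;> simp [stepVal] at hsum_mid ⊢ <;> omega
    obtain ⟨rfl, hps⟩ := hcval
    have hpS : p ∈ S mm 0 := by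
      rw [mem_S]
      refine ⟨by omega, hps, ?_⟩
      apply cnt_eq_zero_of_nonneg
      intro j
      rcases Nat.lt_or_ge j Fm with hj | hj
      · have := hpos (j + 1) (by omega) (by omega)
        rw [htake_small j (by omega)] at this
        simp [stepVal] at this ⊢
        omega
      · rw [List.take_of_length_le (by omega), hps]; simp
    have hqs : ssum q = 0 := by
      have := congrArg ssum hdecomp
      rw [hs] at this
      simp only [List.cons_append, ssum_cons, ssum_append] at this
      simp [stepVal, hps] at this
      omega
    have hqc : cnt 0 q = k := by
      have h1 : cnt 1 p = 0 := by
        have h2 : cnt 0 p = 0 := (mem_S.mp hpS).2.2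
        have h3 := cnt_mono (by norm_num : (0:ℤ) ≤ 1) p
        omega
      have hrw : cnt 0 (true :: p ++ false :: q) = cnt 0 q := by
        rw [List.cons_append, cnt_cons, cnt_append, cnt_cons, hps]
        norm_num [stepVal, h1]
      rw [hdecomp, hrw] at hc
      exact hc
    have hqS : q ∈ S (n - mm) k := by
      rw [mem_S]
      exact ⟨by omega, hqs, hqc⟩
    refine ⟨mm, hmn, Finset.mem_union_left _ ?_⟩
    rw [mem_Am_iff]
    exact ⟨p, q, hpS, hqS, hdecomp⟩
  | false =>
    have hneg := neg_prefix hFlen hmin (by simpa [stepVal] using htake1)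
    have hp1 : (-1 : ℤ) + ssum p ≤ -1 := by
      have := hneg (Fm + 1) (by omega) (by omega)
      rw [htakeF1] at this
      simpa [stepVal] using this
    have hcval : c = true ∧ ssum p = 0 := by
      cases c <;> simp [stepVal] at hsum_mid ⊢ <;> omega
    obtain ⟨rfl, hps⟩ := hcval
    have hprefles : ∀ j, ssum (p.take j) ≤ 0 := by
      intro j
      rcases Nat.lt_or_ge j Fm with hj | hj
      · have := hneg (j + 1) (by omega) (by omega)
        rw [htake_small j (by omega)] at this
        simp [stepVal] at this
        omega
      · rw [List.take_of_length_le (by omega), hps]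
    have hpS : p.map not ∈ S mm 0 := by
      rw [mem_S]
      refine ⟨by simp; omega, by rw [ssum_map_not, hps]; simp, ?_⟩
      apply cnt_eq_zero_of_nonneg
      intro j
      rw [ssum_take_map_not]
      have := hprefles j
      omega
    have hqs : ssum q = 0 := by
      have := congrArg ssum hdecomp
      rw [hs] at this
      simp only [List.cons_append, ssum_cons, ssum_append] at this
      simp [stepVal, hps] at this
      omega
    have hcntp : cnt (-1) p = mm := by
      rw [cnt_eq_count_of_neg (fun j hj => by
        have := hneg (j + 1) (by omega) (by omega)
        rw [htake_small j (by omega)] at this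
        simp [stepVal] at this ⊢
        omega)]
      have := (count_true_of_balanced hps).2
      omega
    have hqc : cnt 0 (false :: p ++ true :: q) = mm + 1 + cnt 0 q := by
      rw [List.cons_append, cnt_cons, cnt_append, cnt_cons, hps]
      norm_num [stepVal, hcntp]
      omega
    rw [hdecomp, hqc] at hc
    have hgate : mm + 1 ≤ k := by omega
    have hqS : q ∈ S (n - mm) (k - (mm + 1)) := by
      rw [mem_S]
      exact ⟨by omega, hqs, by omega⟩
    refine ⟨mm, hmn, Finset.mem_union_right _ ?_⟩
    rw [mem_Bm_iff]
    refine ⟨hgate, p.map not, q, hpS, hqS, ?_⟩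
    rw [hdecomp, glueF]
    simp [List.map_map, Function.comp_def, Bool.not_not]

lemma S_card : ∀ n k : ℕ, k ≤ n → (S n k).card = catalan n := by
  intro n
  induction n using Nat.strong_induction_on with
  | _ n IH =>
    match n with
    | 0 =>
      intro k hk
      interval_cases k
      have : S 0 0 = {[]} := by
        ext l
        simp [mem_S, List.length_eq_zero_iff]
        rintro rfl
        simp
      rw [this]
      simp [catalan_zero]
    | N + 1 =>
      intro k hk
      have hunion : S (N + 1) k = (Finset.range (N + 1)).biUnion (fun m => Am N k m ∪ Bm N k m) := by
        ext x
        simp only [Finset.mem_biUnion, Finset.mem_range]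
        constructor
        · intro hx
          obtain ⟨m, hm, hmem⟩ := cover hx
          exact ⟨m, by omega, hmem⟩
        · rintro ⟨m, hm, hx⟩
          rcases Finset.mem_union.mp hx with h | h
          · exact Am_subset (by omega) h
          · exact Bm_subset (by omega) h
      have hdisj : ((Finset.range (N + 1) : Finset ℕ) : Set ℕ).PairwiseDisjoint
          (fun m => Am N k m ∪ Bm N k m) := by
        intro m _ m' _ hne
        simp only [Function.onFun]
        rw [Finset.disjoint_union_left]
        constructor <;> rw [Finset.disjoint_union_right]
        · exact ⟨Am_disj hne, AB_disj⟩
        · exact ⟨AB_disj.symm, Bm_disj hne⟩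
      rw [hunion, Finset.card_biUnion hdisj]
      have hterm : ∀ m ∈ Finset.range (N + 1),
          (Am N k m ∪ Bm N k m).card =
            (if m + k ≤ N then catalan m * catalan (N - m) else 0) +
              (if m + 1 ≤ k then catalan m * catalan (N - m) else 0) := by
        intro m hm
        rw [Finset.mem_range] at hm
        rw [Finset.card_union_of_disjoint AB_disj]
        have hSm : (S m 0).card = catalan m := IH m (by omega) 0 (by omega)
        congr 1
        · rw [card_Am, hSm]
          by_cases hcase : m + k ≤ N
          · rw [if_pos hcase, IH (N - m) (by omega) k (by omega)]
          · rw [if_neg hcase, S_card_eq_zero (by omega), Nat.mul_zero]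
        · by_cases hcase : m + 1 ≤ k
          · rw [if_pos hcase, card_Bm hcase, hSm, IH (N - m) (by omega) (k - (m + 1)) (by omega)]
          · rw [if_neg hcase, Bm, if_neg hcase, Finset.card_empty]
      rw [Finset.sum_congr rfl hterm, Finset.sum_add_distrib]
      have e1 : ∑ m ∈ Finset.range (N + 1), (if m + k ≤ N then catalan m * catalan (N - m) else 0)
          = ∑ m ∈ Finset.range (N + 1 - k), catalan m * catalan (N - m) := by
        rw [← Finset.sum_subset (Finset.range_subset_range.mpr (by omega : N + 1 - k ≤ N + 1))
          (fun x _ hx => by rw [Finset.mem_range] at hx; rw [if_neg (by omega)])]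
        exact Finset.sum_congr rfl fun x hx => by
          rw [Finset.mem_range] at hx; rw [if_pos (by omega)]
      have e2 : ∑ m ∈ Finset.range (N + 1), (if m + 1 ≤ k then catalan m * catalan (N - m) else 0)
          = ∑ m ∈ Finset.range k, catalan m * catalan (N - m) := by
        rw [← Finset.sum_subset (Finset.range_subset_range.mpr (by omega : k ≤ N + 1))
          (fun x _ hx => by rw [Finset.mem_range] at hx; rw [if_neg (by omega)])]
        exact Finset.sum_congr rfl fun x hx => by
          rw [Finset.mem_range] at hx; rw [if_pos (by omega)]
      rw [e1, e2]
      have e3 : ∑ m ∈ Finset.range k, catalan m * catalan (N - m)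
          = ∑ j ∈ Finset.Ico (N + 1 - k) (N + 1), catalan j * catalan (N - j) := by
        apply Finset.sum_nbij' (fun m => N - m) (fun j => N - j)
        · intro a ha
          rw [Finset.mem_range] at ha
          rw [Finset.mem_Ico]
          omega
        · intro a ha
          rw [Finset.mem_Ico] at ha
          rw [Finset.mem_range]
          omega
        · intro a ha
          rw [Finset.mem_range] at ha
          omega
        · intro a ha
          rw [Finset.mem_Ico] at ha
          omega
        · intro a ha
          rw [Finset.mem_range] at ha
          have : N - (N - a) = a := by omega
          rw [this, Nat.mul_comm]
      rw [e3]
      have e4 : ∑ m ∈ Finset.range (N + 1 - k), catalan m * catalan (N - m)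
            + ∑ j ∈ Finset.Ico (N + 1 - k) (N + 1), catalan j * catalan (N - j)
          = ∑ m ∈ Finset.range (N + 1), catalan m * catalan (N - m) := by
        simp only [Finset.range_eq_Ico]
        exact Finset.sum_Ico_consecutive _ (by omega) (by omega)
      rw [e4, catalan_succ]
      rw [Finset.sum_range fun i => catalan i * catalan (N - i)]

lemma psum_eq (m : ℕ) (f : Fin m → Bool) (p : ℕ) :
    psum f p = ssum ((List.ofFn f).take p) := rfl

lemma cnt_ofFn_eq (m : ℕ) (g : Fin m → Bool) (h : ℤ) :
    cnt h (List.ofFn g) =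
      (Finset.univ.filter fun j : Fin m =>
        g j = true ∧ h + ssum ((List.ofFn g).take j.1) < 0).card := by
  induction m generalizing h with
  | zero => simp [List.ofFn_zero]
  | succ m ih =>
    rw [List.ofFn_succ, cnt_cons, Finset.card_filter, Fin.sum_univ_succ]
    have ih' := ih (fun i => g i.succ) (h + stepVal (g 0))
    rw [Finset.card_filter] at ih'
    rw [ih']
    congr 1
    · simp
    · apply Finset.sum_congr rfl
      intro j _
      have hcast : ((j.succ : Fin (m + 1)) : ℕ) = (j : ℕ) + 1 := rfl
      rw [hcast, List.take_succ_cons]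
      refine if_congr ?_ rfl rfl
      rw [ssum_cons]
      constructor <;> rintro ⟨h1, h2⟩ <;> exact ⟨h1, by omega⟩

lemma stat_eq (n : ℕ) (f : Fin (2 * n + 1) → Bool) (hf0 : f 0 = true) :
    (Finset.univ.filter fun i : Fin (2 * n + 1) =>
        0 < i.1 ∧ f i = true ∧ psum f i.1 ≤ 0).card
      = cnt 0 (List.ofFn fun j : Fin (2 * n) => f j.succ) := by
  have hofn : List.ofFn f = true :: List.ofFn fun j : Fin (2 * n) => f j.succ := by
    rw [List.ofFn_succ, hf0]
  rw [cnt_ofFn_eq, Finset.card_filter, Finset.card_filter, Fin.sum_univ_succ]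
  have hz : (if 0 < ((0 : Fin (2*n+1)) : ℕ) ∧ f 0 = true ∧ psum f ((0 : Fin (2*n+1)) : ℕ) ≤ 0 then 1 else 0) = 0 := by
    simp
  rw [hz, zero_add]
  apply Finset.sum_congr rfl
  intro j _
  have htk : psum f ((j.succ : Fin (2*n+1)) : ℕ)
      = 1 + ssum ((List.ofFn fun i : Fin (2*n) => f i.succ).take j.1) := by
    rw [psum_eq, hofn]
    have hcast : ((j.succ : Fin (2*n+1)) : ℕ) = (j : ℕ) + 1 := rfl
    rw [hcast, List.take_succ_cons, ssum_cons]
    simp [stepVal]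
  refine if_congr ?_ rfl rfl
  constructor
  · rintro ⟨-, h1, h2⟩
    exact ⟨h1, by rw [htk] at h2; omega⟩
  · rintro ⟨h1, h2⟩
    exact ⟨by simp [Fin.succ_pos], h1, by rw [htk]; omega⟩

/-- The number of sequences of 2n+1 steps ±1 with total sum 1 that begin with an
up-step and have exactly k later up-steps starting at height ≤ 0 (equivalently,
after dropping the initial up-step, exactly k up-steps below the x-axis)
equals C_n, for each k = 0,1,…,n. -/
theorem shifted_paths_count (n k : ℕ) (hk : k ≤ n) :
    ((Finset.univ : Finset (Fin (2 * n + 1) → Bool)).filter fun f =>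
        f 0 = true ∧ psum f (2 * n + 1) = 1 ∧
        (Finset.univ.filter fun i : Fin (2 * n + 1) =>
          0 < i.1 ∧ f i = true ∧ psum f i.1 ≤ 0).card = k).card = catalan n := by
  classical
  rw [← S_card n k hk]
  apply Finset.card_bij (fun f _ => List.ofFn fun j : Fin (2 * n) => f j.succ)
  · -- maps into S n k
    intro f hf
    rw [Finset.mem_filter] at hf
    obtain ⟨-, hf0, hfs, hfc⟩ := hf
    have hofn : List.ofFn f = true :: List.ofFn fun j : Fin (2 * n) => f j.succ := by
      rw [List.ofFn_succ, hf0]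
    have hssum : ssum (List.ofFn fun j : Fin (2 * n) => f j.succ) = 0 := by
      rw [psum_eq, List.take_of_length_le (by simp), hofn, ssum_cons] at hfs
      simp [stepVal] at hfs
      omega
    rw [mem_S]
    refine ⟨by simp, hssum, ?_⟩
    rw [← stat_eq n f hf0, hfc]
  · -- injective
    intro f hf f' hf' heq
    rw [Finset.mem_filter] at hf hf'
    have htail := List.ofFn_injective heq
    funext i
    rcases Fin.eq_zero_or_eq_succ i with rfl | ⟨j, rfl⟩
    · rw [hf.2.1, hf'.2.1]
    · exact congrFun htail j
  · -- surjective
    intro t ht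
    rw [mem_S] at ht
    obtain ⟨htl, hts, htc⟩ := ht
    have hl : (true :: t).length = 2 * n + 1 := by simp [htl]
    refine ⟨fun i => (true :: t).get (Fin.cast hl.symm i), ?_, ?_⟩
    · rw [Finset.mem_filter]
      have hofn : (List.ofFn fun i : Fin (2*n+1) => (true :: t).get (Fin.cast hl.symm i)) = true :: t := by
        apply List.ext_get (by simp [htl])
        intro i h1 h2
        simp
        cases i with
        | zero => rfl
        | succ j => simp
      have hf0 : (fun i : Fin (2*n+1) => (true :: t).get (Fin.cast hl.symm i)) 0 = true := rfl
      have htail : (List.ofFn fun j : Fin (2*n) =>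
          (true :: t).get (Fin.cast hl.symm j.succ)) = t := by
        have h2 := hofn
        rw [List.ofFn_succ] at h2
        exact (List.cons.injEq _ _ _ _ ▸ h2).2
      refine ⟨Finset.mem_univ _, rfl, ?_, ?_⟩
      · rw [psum_eq, List.take_of_length_le (by simp), hofn, ssum_cons, hts]
        simp [stepVal]
      · rw [stat_eq n _ hf0, htail, htc]
    · have htail : (List.ofFn fun j : Fin (2*n) =>
          (true :: t).get (Fin.cast hl.symm j.succ)) = t := by
        have hofn : (List.ofFn fun i : Fin (2*n+1) => (true :: t).get (Fin.cast hl.symm i)) = true :: t := by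
          apply List.ext_get (by simp [htl])
          intro i h1 h2
          simp
          cases i with
          | zero => rfl
          | succ j => simp
        rw [List.ofFn_succ] at hofn
        exact (List.cons.injEq _ _ _ _ ▸ hofn).2
      exact htail
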